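/- Let σ₁ : M_n(ℂ) → M_k(ℂ) be a unital *-homomorphism and σ₂ : M_n(ℂ) → M_l(ℂ) a unital *-anti-homomorphism, and suppose trace(σ₁(A) ⊕ σ₂(A)) = trace(A) for all A ∈ M_n(ℂ), where ⊕ denotes the block-diagonal embedding into M_{k+l}(ℂ). Then the map φ(P) = σ₁(P) ⊕ σ₂(P) on projections of trace c preserves the transition probability: trace(φ(P)φ(Q)) = trace(PQ) for all projections P, Q of trace c. -/
import Mathlib

open Matrix

lemma trace_fb {k l : ℕ} (A : Matrix (Fin k) (Fin k) ℂ) (B : Matrix (Fin l) (Fin l) ℂ) :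
    (Matrix.fromBlocks A 0 0 B).trace = A.trace + B.trace := by
  simp [Matrix.trace, Matrix.diag, Fintype.sum_sum_type, Matrix.fromBlocks]

/-- The block-diagonal sum of a unital *-homomorphism and a unital *-anti-homomorphism
which together preserve the trace gives a transition probability preserving map on
projections of trace `c`. -/
theorem stmt9 {n k l c : ℕ}
    (σ₁ : Matrix (Fin n) (Fin n) ℂ →ₐ[ℂ] Matrix (Fin k) (Fin k) ℂ)
    (hstar1 : ∀ A : Matrix (Fin n) (Fin n) ℂ, σ₁ Aᴴ = (σ₁ A)ᴴ)
    (σ₂ : Matrix (Fin n) (Fin n) ℂ →ₗ[ℂ] Matrix (Fin l) (Fin l) ℂ)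
    (hmul2 : ∀ A B, σ₂ (A * B) = σ₂ B * σ₂ A) (hone2 : σ₂ 1 = 1)
    (hstar2 : ∀ A : Matrix (Fin n) (Fin n) ℂ, σ₂ Aᴴ = (σ₂ A)ᴴ)
    (htr : ∀ A : Matrix (Fin n) (Fin n) ℂ,
      (Matrix.fromBlocks (σ₁ A) 0 0 (σ₂ A)).trace = A.trace)
    (P Q : Matrix (Fin n) (Fin n) ℂ)
    (hP : P.IsHermitian ∧ P * P = P ∧ P.trace = (c : ℂ))
    (hQ : Q.IsHermitian ∧ Q * Q = Q ∧ Q.trace = (c : ℂ)) :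
    (Matrix.fromBlocks (σ₁ P) 0 0 (σ₂ P) *
      Matrix.fromBlocks (σ₁ Q) 0 0 (σ₂ Q)).trace = (P * Q).trace := by
  have key : (Matrix.fromBlocks (σ₁ P) 0 0 (σ₂ P) *
      Matrix.fromBlocks (σ₁ Q) 0 0 (σ₂ Q)).trace
      = (σ₁ P * σ₁ Q).trace + (σ₂ P * σ₂ Q).trace := by
    rw [Matrix.fromBlocks_multiply]
    simp [trace_fb]
  rw [key, ← _root_.map_mul, Matrix.trace_mul_comm (σ₂ P) (σ₂ Q), ← hmul2,
    ← htr (P * Q), trace_fb]
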